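/- (Relations between q-Genocchi and q-Bernoulli polynomials.) For every integer n ≥ 0, every positive integer m, and all x, y ∈ ℂ: (i) G_{n,q}(x,y) = (1/[n+1]_q) Σ_{k=0}^{n+1} m^{−(n−k)} [n+1 choose k]_q ( Σ_{j=0}^{k} [k choose j]_q ((−1;q)_{k−j}/(m^{k−j} 2^{k−j})) G_{j,q}(x) − G_{k,q}(x) ) B_{n+1−k,q}(my); and (ii) B_{n,q}(x,y) = (1/(2[n+1]_q)) Σ_{k=0}^{n+1} m^{−(n−k)} [n+1 choose k]_q ( Σ_{j=0}^{k} [k choose j]_q ((−1;q)_{k−j}/(m^{k−j} 2^{k−j})) B_{j,q}(x) + B_{k,q}(x) ) G_{n+1−k,q}(my). -/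

import Mathlib

open Finset PowerSeries

/-- The `q`-number `[n]_q = (1 - q^n)/(1 - q)`. -/
noncomputable def qNum (q : ℂ) (n : ℕ) : ℂ := (1 - q ^ n) / (1 - q)

/-- The `q`-factorial `[n]_q!`. -/
noncomputable def qFact (q : ℂ) : ℕ → ℂ
  | 0 => 1
  | n + 1 => qNum q (n + 1) * qFact q n

/-- The `q`-shifted factorial `(a; q)_n = ∏_{j=0}^{n-1} (1 - q^j a)`. -/
noncomputable def qShift (a q : ℂ) (n : ℕ) : ℂ := ∏ j ∈ Finset.range n, (1 - q ^ j * a)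

/-- The Gaussian binomial coefficient `[n choose k]_q = (q;q)_n / ((q;q)_{n-k} (q;q)_k)`. -/
noncomputable def qBinom (q : ℂ) (n k : ℕ) : ℂ :=
  qShift q q n / (qShift q q (n - k) * qShift q q k)

/-- The formal power series (in `t`) `𝓔_q(tx) = Σ_{n≥0} (-1;q)_n (x)^n t^n / (2^n [n]_q!)`. -/
noncomputable def qExp (q x : ℂ) : PowerSeries ℂ :=
  PowerSeries.mk fun n => qShift (-1) q n * x ^ n / (2 ^ n * qFact q n)

/-- The generating series `Σ_{n≥0} a_n t^n / [n]_q!` of a sequence `a`. -/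
noncomputable def qGen (q : ℂ) (a : ℕ → ℂ) : PowerSeries ℂ :=
  PowerSeries.mk fun n => a n / qFact q n

/-- The `q`-addition `(x ⊕_q y)^n`. -/
noncomputable def qAdd (q x y : ℂ) (n : ℕ) : ℂ :=
  ∑ k ∈ Finset.range (n + 1),
    qBinom q n k * (qShift (-1) q k * qShift (-1) q (n - k) / 2 ^ n) * x ^ k * y ^ (n - k)

section Aux
variable {q : ℂ}

lemma qpow_ne_one (hq1 : ‖q‖ < 1) (j : ℕ) : q ^ (j + 1) ≠ 1 := by
  intro h
  have h2 : ‖q ^ (j + 1)‖ < 1 := by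
    rw [norm_pow]
    exact pow_lt_one₀ (norm_nonneg q) hq1 (Nat.succ_ne_zero j)
  rw [h] at h2; simp at h2

lemma one_sub_q_ne (hq1 : ‖q‖ < 1) : (1 : ℂ) - q ≠ 0 := by
  have h := qpow_ne_one hq1 0
  rw [zero_add, pow_one] at h
  exact sub_ne_zero.mpr (Ne.symm h)

lemma qNum_ne (hq1 : ‖q‖ < 1) (j : ℕ) : qNum q (j + 1) ≠ 0 :=
  div_ne_zero (sub_ne_zero.mpr (Ne.symm (qpow_ne_one hq1 j))) (one_sub_q_ne hq1)

lemma qFact_ne (hq1 : ‖q‖ < 1) : ∀ n, qFact q n ≠ 0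
  | 0 => one_ne_zero
  | n + 1 => mul_ne_zero (qNum_ne hq1 n) (qFact_ne hq1 n)

lemma qFact_succ (n : ℕ) : qFact q (n + 1) = qNum q (n + 1) * qFact q n := rfl

lemma qShift_qq (hq1 : ‖q‖ < 1) : ∀ n, qShift q q n = (1 - q) ^ n * qFact q n
  | 0 => by simp [qShift, qFact]
  | n + 1 => by
    rw [qShift, Finset.prod_range_succ, ← qShift, qShift_qq hq1 n, qFact_succ]
    have h1 : 1 - q ^ n * q = (1 - q) * qNum q (n + 1) := by
      rw [qNum, mul_div_cancel₀ _ (one_sub_q_ne hq1), pow_succ]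
    rw [h1]; ring

lemma qBinom_fact (hq1 : ‖q‖ < 1) {k n : ℕ} (h : k ≤ n) :
    qBinom q n k = qFact q n / (qFact q k * qFact q (n - k)) := by
  obtain ⟨d, rfl⟩ := Nat.exists_eq_add_of_le h
  rw [qBinom, Nat.add_sub_cancel_left, qShift_qq hq1, qShift_qq hq1, qShift_qq hq1, pow_add]
  have h1 : (1 : ℂ) - q ≠ 0 := one_sub_q_ne hq1
  have h2 : ∀ j, qFact q j ≠ 0 := qFact_ne hq1
  rw [div_eq_div_iff (mul_ne_zero (mul_ne_zero (pow_ne_zero _ h1) (h2 d)) (mul_ne_zero (pow_ne_zero _ h1) (h2 k))) (mul_ne_zero (h2 k) (h2 d))]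
  ring

lemma qExp_zero : qExp q 0 = 1 := by
  ext n
  cases n with
  | zero => simp [qExp, qShift, qFact]
  | succ n => simp [qExp, coeff_one, coeff_mk]

lemma rescale_qExp (c z : ℂ) : rescale c (qExp q z) = qExp q (c * z) := by
  ext n
  rw [coeff_rescale]
  simp only [qExp, coeff_mk, mul_pow]
  ring

lemma qExp_constCoeff : PowerSeries.constantCoeff (qExp q 1) = 1 := by
  rw [← coeff_zero_eq_constantCoeff]
  simp [qExp, qShift, qFact]

lemma qExp_add_one_ne : qExp q 1 + 1 ≠ 0 := by
  intro h
  have := congrArg (PowerSeries.constantCoeff) h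
  rw [map_add, qExp_constCoeff, map_one, map_zero] at this
  norm_num at this

lemma qExp_sub_one_ne (hq1 : ‖q‖ < 1) : qExp q 1 - 1 ≠ 0 := by
  intro h
  have h2 := congrArg (coeff 1) h
  have hf1 : qFact q 1 = 1 := by
    rw [qFact_succ]
    simp [qFact, qNum, div_self (one_sub_q_ne hq1)]
  rw [map_sub, coeff_one, map_zero] at h2
  simp [qExp, qShift, hf1] at h2

lemma coeff_prod_eq (c ε : ℂ) (g b : ℕ → ℂ) (N : ℕ) :
    coeff N ((qGen q g * qExp q c + PowerSeries.C ε * qGen q g) * rescale c (qGen q b)) =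
      ∑ k ∈ range (N + 1),
        ((∑ j ∈ range (k + 1), (g j / qFact q j) *
            (qShift (-1) q (k - j) * c ^ (k - j) / (2 ^ (k - j) * qFact q (k - j)))) +
          ε * (g k / qFact q k)) *
          (c ^ (N - k) * (b (N - k) / qFact q (N - k))) := by
  rw [coeff_mul, Finset.Nat.sum_antidiagonal_eq_sum_range_succ_mk]
  refine Finset.sum_congr rfl fun k _ => ?_
  congr 1
  · rw [map_add, coeff_C_mul, coeff_mul, Finset.Nat.sum_antidiagonal_eq_sum_range_succ_mk]
    simp only [qGen, qExp, coeff_mk]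
  · rw [coeff_rescale]
    simp only [qGen, coeff_mk]

lemma term_eq (hq1 : ‖q‖ < 1) {m : ℕ} (hm0 : (m : ℂ) ≠ 0) (ε : ℂ)
    (g : ℕ → ℂ) (bv : ℂ) (n k : ℕ) (hk : k ≤ n + 1) :
    qFact q n * (m : ℂ) *
      (((∑ j ∈ range (k + 1), (g j / qFact q j) *
            (qShift (-1) q (k - j) * ((m : ℂ)⁻¹) ^ (k - j) / (2 ^ (k - j) * qFact q (k - j)))) +
          ε * (g k / qFact q k)) *
        (((m : ℂ)⁻¹) ^ (n + 1 - k) * (bv / qFact q (n + 1 - k))))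
    = (1 / qNum q (n + 1)) *
      ((m : ℂ) ^ ((k : ℤ) - (n : ℤ)) * qBinom q (n + 1) k *
        ((∑ j ∈ range (k + 1), qBinom q k j *
            (qShift (-1) q (k - j) / ((m : ℂ) ^ (k - j) * 2 ^ (k - j))) * g j) + ε * g k) * bv) := by
  have hf : ∀ j, qFact q j ≠ 0 := qFact_ne hq1
  have h2 : (2 : ℂ) ≠ 0 := two_ne_zero
  have hinner : (∑ j ∈ range (k + 1), (g j / qFact q j) *
        (qShift (-1) q (k - j) * ((m : ℂ)⁻¹) ^ (k - j) / (2 ^ (k - j) * qFact q (k - j))))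
      = (qFact q k)⁻¹ * ∑ j ∈ range (k + 1), qBinom q k j *
          (qShift (-1) q (k - j) / ((m : ℂ) ^ (k - j) * 2 ^ (k - j))) * g j := by
    rw [Finset.mul_sum]
    refine Finset.sum_congr rfl fun j hj => ?_
    have hjk : j ≤ k := Nat.lt_succ_iff.mp (mem_range.mp hj)
    obtain ⟨e, rfl⟩ := Nat.exists_eq_add_of_le hjk
    rw [qBinom_fact hq1 (Nat.le_add_right j e), Nat.add_sub_cancel_left]
    have := hf j; have := hf e; have := hf (j + e)
    have hme : ((m : ℂ)) ^ e ≠ 0 := pow_ne_zero _ hm0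
    rw [inv_pow]
    field_simp
  rw [hinner, qBinom_fact hq1 hk]
  obtain ⟨d, hd⟩ : ∃ d, n + 1 = k + d := ⟨n + 1 - k, by omega⟩
  have hd2 : n + 1 - k = d := by omega
  have hz : (k : ℤ) - (n : ℤ) = 1 - (d : ℤ) := by omega
  rw [hd2, hz, zpow_sub₀ hm0, zpow_one, zpow_natCast, qFact_succ]
  have hN : qNum q (n + 1) ≠ 0 := qNum_ne hq1 n
  have := hf n; have := hf k; have := hf d
  have hmd : ((m : ℂ)) ^ d ≠ 0 := pow_ne_zero _ hm0
  rw [inv_pow]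
  field_simp

end Aux

/-- Relations between the `q`-Genocchi and `q`-Bernoulli polynomials. -/
theorem qGenocchi_qBernoulli_relations (q : ℂ)
    (hq0 : 0 < ‖q‖) (hq1 : ‖q‖ < 1)
    (B G : ℂ → ℂ → ℕ → ℂ)
    (hB : ∀ x y : ℂ, qGen q (B x y) * (qExp q 1 - 1) = PowerSeries.X * qExp q x * qExp q y)
    (hG : ∀ x y : ℂ, qGen q (G x y) * (qExp q 1 + 1) = 2 * PowerSeries.X * qExp q x * qExp q y)
    (n : ℕ) (m : ℕ) (hm : 0 < m) (x y : ℂ) :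
    (G x y n = (1 / qNum q (n + 1)) * ∑ k ∈ Finset.range (n + 2),
        (m : ℂ) ^ ((k : ℤ) - (n : ℤ)) * qBinom q (n + 1) k *
          ((∑ j ∈ Finset.range (k + 1),
              qBinom q k j * (qShift (-1) q (k - j) / ((m : ℂ) ^ (k - j) * 2 ^ (k - j))) *
                G x 0 j)
            - G x 0 k) *
          B ((m : ℂ) * y) 0 (n + 1 - k)) ∧
    (B x y n = (1 / (2 * qNum q (n + 1))) * ∑ k ∈ Finset.range (n + 2),
        (m : ℂ) ^ ((k : ℤ) - (n : ℤ)) * qBinom q (n + 1) k *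
          ((∑ j ∈ Finset.range (k + 1),
              qBinom q k j * (qShift (-1) q (k - j) / ((m : ℂ) ^ (k - j) * 2 ^ (k - j))) *
                B x 0 j)
            + B x 0 k) *
          G ((m : ℂ) * y) 0 (n + 1 - k)) := by
  have hm0 : (m : ℂ) ≠ 0 := Nat.cast_ne_zero.mpr hm.ne'
  have hf : ∀ j, qFact q j ≠ 0 := qFact_ne hq1
  have hcm : ((m : ℂ))⁻¹ * ((m : ℂ) * y) = y := by field_simp
  constructor
  · -- Genocchi in terms of Bernoulli
    have hP := hG x 0
    rw [qExp_zero, mul_one] at hP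
    have hQ := congrArg (rescale ((m : ℂ))⁻¹) (hB ((m : ℂ) * y) 0)
    simp only [map_mul, map_sub, map_one, rescale_qExp, rescale_X, hcm, mul_one, mul_zero,
      qExp_zero] at hQ
    have key1 : (qGen q (G x 0) * qExp q ((m : ℂ))⁻¹ +
          PowerSeries.C (-1) * qGen q (G x 0)) *
          rescale ((m : ℂ))⁻¹ (qGen q (B ((m : ℂ) * y) 0)) =
        PowerSeries.C ((m : ℂ))⁻¹ * (qGen q (G x y) * PowerSeries.X) := by
      have hc1 : (PowerSeries.C (-1) : PowerSeries ℂ) = -1 := by rw [map_neg, map_one]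
      apply mul_right_cancel₀ (qExp_add_one_ne (q := q))
      rw [hc1]
      calc (qGen q (G x 0) * qExp q ((m : ℂ))⁻¹ + -1 * qGen q (G x 0)) *
            rescale ((m : ℂ))⁻¹ (qGen q (B ((m : ℂ) * y) 0)) * (qExp q 1 + 1)
          = (qGen q (G x 0) * (qExp q 1 + 1)) *
            (rescale ((m : ℂ))⁻¹ (qGen q (B ((m : ℂ) * y) 0)) * (qExp q ((m : ℂ))⁻¹ - 1)) := by
            ring
        _ = (2 * PowerSeries.X * qExp q x) *
            (PowerSeries.C ((m : ℂ))⁻¹ * PowerSeries.X * qExp q y) := by rw [hP, hQ]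
        _ = PowerSeries.C ((m : ℂ))⁻¹ *
            (2 * PowerSeries.X * qExp q x * qExp q y * PowerSeries.X) := by ring
        _ = PowerSeries.C ((m : ℂ))⁻¹ *
            (qGen q (G x y) * (qExp q 1 + 1) * PowerSeries.X) := by rw [hG x y]
        _ = PowerSeries.C ((m : ℂ))⁻¹ * (qGen q (G x y) * PowerSeries.X) *
            (qExp q 1 + 1) := by ring
    have hco := congrArg (coeff (n + 1)) key1
    rw [coeff_prod_eq, coeff_C_mul, coeff_succ_mul_X] at hco
    simp only [qGen, coeff_mk] at hco
    have hsum : qFact q n * (m : ℂ) *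
        (∑ k ∈ range (n + 1 + 1),
          ((∑ j ∈ range (k + 1), (G x 0 j / qFact q j) *
              (qShift (-1) q (k - j) * ((m : ℂ))⁻¹ ^ (k - j) /
                (2 ^ (k - j) * qFact q (k - j)))) +
            (-1) * (G x 0 k / qFact q k)) *
            (((m : ℂ))⁻¹ ^ (n + 1 - k) * (B ((m : ℂ) * y) 0 (n + 1 - k) / qFact q (n + 1 - k))))
        = (1 / qNum q (n + 1)) * ∑ k ∈ Finset.range (n + 2),
            (m : ℂ) ^ ((k : ℤ) - (n : ℤ)) * qBinom q (n + 1) k *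
              ((∑ j ∈ Finset.range (k + 1),
                  qBinom q k j * (qShift (-1) q (k - j) / ((m : ℂ) ^ (k - j) * 2 ^ (k - j))) *
                    G x 0 j)
                - G x 0 k) *
              B ((m : ℂ) * y) 0 (n + 1 - k) := by
      rw [Finset.mul_sum, Finset.mul_sum]
      refine Finset.sum_congr rfl fun k hk => ?_
      have hk' : k ≤ n + 1 := by have := Finset.mem_range.mp hk; omega
      linear_combination term_eq hq1 hm0 (-1) (G x 0) (B ((m : ℂ) * y) 0 (n + 1 - k)) n k hk'
    have hfn := hf n
    rw [← hsum, hco]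
    field_simp
  · -- Bernoulli in terms of Genocchi
    have hP := hB x 0
    rw [qExp_zero, mul_one] at hP
    have hQ := congrArg (rescale ((m : ℂ))⁻¹) (hG ((m : ℂ) * y) 0)
    simp only [map_mul, map_add, map_one, map_ofNat, rescale_qExp, rescale_X, hcm, mul_one,
      mul_zero, qExp_zero] at hQ
    have key2 : (qGen q (B x 0) * qExp q ((m : ℂ))⁻¹ +
          PowerSeries.C 1 * qGen q (B x 0)) *
          rescale ((m : ℂ))⁻¹ (qGen q (G ((m : ℂ) * y) 0)) =
        PowerSeries.C (2 * ((m : ℂ))⁻¹) * (qGen q (B x y) * PowerSeries.X) := by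
      have hc1 : (PowerSeries.C 1 : PowerSeries ℂ) = 1 := map_one _
      have hc2 : (PowerSeries.C (2 * ((m : ℂ))⁻¹) : PowerSeries ℂ) =
          2 * PowerSeries.C ((m : ℂ))⁻¹ := by rw [map_mul, map_ofNat]
      apply mul_right_cancel₀ (qExp_sub_one_ne hq1)
      rw [hc1, hc2]
      calc (qGen q (B x 0) * qExp q ((m : ℂ))⁻¹ + 1 * qGen q (B x 0)) *
            rescale ((m : ℂ))⁻¹ (qGen q (G ((m : ℂ) * y) 0)) * (qExp q 1 - 1)
          = (qGen q (B x 0) * (qExp q 1 - 1)) *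
            (rescale ((m : ℂ))⁻¹ (qGen q (G ((m : ℂ) * y) 0)) * (qExp q ((m : ℂ))⁻¹ + 1)) := by
            ring
        _ = (PowerSeries.X * qExp q x) *
            (2 * (PowerSeries.C ((m : ℂ))⁻¹ * PowerSeries.X) * qExp q y) := by rw [hP, hQ]
        _ = 2 * PowerSeries.C ((m : ℂ))⁻¹ *
            (PowerSeries.X * qExp q x * qExp q y * PowerSeries.X) := by ring
        _ = 2 * PowerSeries.C ((m : ℂ))⁻¹ *
            (qGen q (B x y) * (qExp q 1 - 1) * PowerSeries.X) := by rw [hB x y]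
        _ = 2 * PowerSeries.C ((m : ℂ))⁻¹ * (qGen q (B x y) * PowerSeries.X) *
            (qExp q 1 - 1) := by ring
    have hco := congrArg (coeff (n + 1)) key2
    rw [coeff_prod_eq, coeff_C_mul, coeff_succ_mul_X] at hco
    simp only [qGen, coeff_mk] at hco
    have hsum : qFact q n * (m : ℂ) *
        (∑ k ∈ range (n + 1 + 1),
          ((∑ j ∈ range (k + 1), (B x 0 j / qFact q j) *
              (qShift (-1) q (k - j) * ((m : ℂ))⁻¹ ^ (k - j) /
                (2 ^ (k - j) * qFact q (k - j)))) +
            1 * (B x 0 k / qFact q k)) *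
            (((m : ℂ))⁻¹ ^ (n + 1 - k) * (G ((m : ℂ) * y) 0 (n + 1 - k) / qFact q (n + 1 - k))))
        = (1 / qNum q (n + 1)) * ∑ k ∈ Finset.range (n + 2),
            (m : ℂ) ^ ((k : ℤ) - (n : ℤ)) * qBinom q (n + 1) k *
              ((∑ j ∈ Finset.range (k + 1),
                  qBinom q k j * (qShift (-1) q (k - j) / ((m : ℂ) ^ (k - j) * 2 ^ (k - j))) *
                    B x 0 j)
                + B x 0 k) *
              G ((m : ℂ) * y) 0 (n + 1 - k) := by
      rw [Finset.mul_sum, Finset.mul_sum]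
      refine Finset.sum_congr rfl fun k hk => ?_
      have hk' : k ≤ n + 1 := by have := Finset.mem_range.mp hk; omega
      linear_combination term_eq hq1 hm0 1 (B x 0) (G ((m : ℂ) * y) 0 (n + 1 - k)) n k hk'
    rw [show (1 : ℂ) / (2 * qNum q (n + 1)) = (1 / 2) * (1 / qNum q (n + 1)) by
      rw [one_div, mul_inv]; ring, mul_assoc, ← hsum, hco]
    have hfn := hf n
    field_simp
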